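/- Let T be a densely defined closed operator on a complex Hilbert space satisfying T*T = T². Then T is self-adjoint. -/

import Mathlib

open LinearPMap

set_option linter.unusedSectionVars false

noncomputable section

section BanachDefs

variable {H : Type*} [NormedAddCommGroup H] [NormedSpace ℂ H]

/-- Composition `g ∘ f` of unbounded operators, with the natural (maximal) domain
`{x ∈ dom f : f x ∈ dom g}`. -/
def LinearPMap.pComp (g f : H →ₗ.[ℂ] H) : H →ₗ.[ℂ] H where
  domain := (g.domain.comap f.toFun).map f.domain.subtype
  toFun := g.toFun ∘ₗ (f.toFun.restrict (p := g.domain.comap f.toFun) (q := g.domain)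
      (fun _ hx => hx)) ∘ₗ
    ((Submodule.equivMapOfInjective f.domain.subtype (Submodule.injective_subtype _)
      (g.domain.comap f.toFun)).symm).toLinearMap

/-- `n`-th power of an unbounded operator; `T^0` is the identity on all of `H`. -/
def LinearPMap.pPow (T : H →ₗ.[ℂ] H) : ℕ → (H →ₗ.[ℂ] H)
  | 0 => (LinearMap.id : H →ₗ[ℂ] H).toPMap ⊤
  | n + 1 => T.pComp (T.pPow n)

theorem LinearPMap.pPow_domain_succ_le (T : H →ₗ.[ℂ] H) (n : ℕ) :
    (T.pPow (n + 1)).domain ≤ (T.pPow n).domain := by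
  intro x hx
  simp_rw [pPow, pComp] at hx
  obtain ⟨y, -, rfl⟩ := hx
  exact y.2

theorem LinearPMap.pPow_domain_le (T : H →ₗ.[ℂ] H) {i n : ℕ} (h : i ≤ n) :
    (T.pPow n).domain ≤ (T.pPow i).domain := by
  induction n with
  | zero => exact Nat.le_zero.mp h ▸ le_rfl
  | succ n ih =>
    rcases Nat.lt_succ_iff_lt_or_eq.mp (Nat.lt_succ_of_le h) with h' | rfl
    · exact le_trans (T.pPow_domain_succ_le n) (ih (Nat.lt_succ_iff.mp h'))
    · exact le_rfl

/-- `p(T)` for a complex polynomial `p`, defined on `D(T^n)` where `n = deg p`. -/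
def LinearPMap.polyApp (p : Polynomial ℂ) (T : H →ₗ.[ℂ] H) : H →ₗ.[ℂ] H where
  domain := (T.pPow p.natDegree).domain
  toFun := ∑ i ∈ (Finset.range (p.natDegree + 1)).attach,
    p.coeff i.1 • ((T.pPow i.1).toFun ∘ₗ Submodule.inclusion
      (T.pPow_domain_le (Nat.lt_succ_iff.mp (Finset.mem_range.mp i.2))))

/-- `A - μ • I` with domain `dom A`. -/
def LinearPMap.subConst (A : H →ₗ.[ℂ] H) (μ : ℂ) : H →ₗ.[ℂ] H :=
  ⟨A.domain, A.toFun - μ • A.domain.subtype⟩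

/-- An unbounded operator is boundedly invertible if it is bijective from its domain onto `H`
with an everywhere-defined bounded (continuous) inverse. -/
def LinearPMap.IsBddInvertible (A : H →ₗ.[ℂ] H) : Prop :=
  ∃ B : H →L[ℂ] H, (∀ y : H, ∃ hy : B y ∈ A.domain, A ⟨B y, hy⟩ = y) ∧
    ∀ x : A.domain, B (A x) = (x : H)

/-- The spectrum of an unbounded operator: `μ ∉ σ(A)` iff `A - μI` is bijective with a
bounded everywhere-defined inverse. -/
def LinearPMap.pSpectrum (A : H →ₗ.[ℂ] H) : Set ℂ :=
  {μ | ¬ (A.subConst μ).IsBddInvertible}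

/-- The kernel of an unbounded operator, as a subset of `H`. -/
def LinearPMap.pKer (A : H →ₗ.[ℂ] H) : Set H :=
  {x | ∃ hx : x ∈ A.domain, A ⟨x, hx⟩ = 0}

/-- The range of an unbounded operator. -/
def LinearPMap.pRan (A : H →ₗ.[ℂ] H) : Set H :=
  Set.range fun x : A.domain => A x

/-- A bounded everywhere-defined operator seen as an unbounded operator. -/
def ContinuousLinearMap.toPMapTop (B : H →L[ℂ] H) : H →ₗ.[ℂ] H :=
  (B : H →ₗ[ℂ] H).toPMap ⊤

end BanachDefs

section HilbertDefs

variable {H : Type*} [NormedAddCommGroup H] [InnerProductSpace ℂ H] [CompleteSpace H]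

/-- A densely defined closed operator is quasinormal if `T T* T = T* T T`. -/
def LinearPMap.IsQuasinormal (T : H →ₗ.[ℂ] H) : Prop :=
  T.IsClosed ∧ Dense (T.domain : Set H) ∧
    T.pComp (T.adjoint.pComp T) = T.adjoint.pComp (T.pComp T)

/-- A densely defined closed operator is normal if `T* T = T T*` (an equality of unbounded
operators, domains included). -/
def LinearPMap.IsNormal (T : H →ₗ.[ℂ] H) : Prop :=
  T.IsClosed ∧ Dense (T.domain : Set H) ∧ T.adjoint.pComp T = T.pComp T.adjoint

/-- A symmetric (not necessarily densely defined) operator. -/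
def LinearPMap.IsSymm (T : H →ₗ.[ℂ] H) : Prop :=
  ∀ x y : T.domain, inner ℂ (T x) (y : H) = (inner ℂ (x : H) (T y) : ℂ)

/-- A paranormal operator: `‖Tx‖² ≤ ‖T²x‖ ‖x‖` for every `x ∈ D(T²)`. -/
def LinearPMap.IsParanormal (T : H →ₗ.[ℂ] H) : Prop :=
  ∀ (x : H) (hx : x ∈ T.domain) (hTx : T ⟨x, hx⟩ ∈ T.domain),
    ‖T ⟨x, hx⟩‖ ^ 2 ≤ ‖T ⟨T ⟨x, hx⟩, hTx⟩‖ * ‖x‖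

end HilbertDefs

end

section Aux
variable {H : Type*} [NormedAddCommGroup H] [NormedSpace ℂ H]

theorem LinearPMap.mem_pComp_domain {g f : H →ₗ.[ℂ] H} {x : H} :
    x ∈ (g.pComp f).domain ↔ ∃ hx : x ∈ f.domain, f ⟨x, hx⟩ ∈ g.domain := by
  constructor
  · rintro ⟨y, hy, rfl⟩
    exact ⟨y.2, hy⟩
  · rintro ⟨hx, hfx⟩
    exact ⟨⟨x, hx⟩, hfx, rfl⟩

theorem LinearPMap.pComp_apply {g f : H →ₗ.[ℂ] H} (x : (g.pComp f).domain)
    (hx : (x:H) ∈ f.domain) (hfx : f ⟨(x:H), hx⟩ ∈ g.domain) :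
    (g.pComp f) x = g ⟨f ⟨(x:H), hx⟩, hfx⟩ := by
  have h1 : (((Submodule.equivMapOfInjective f.domain.subtype (Submodule.injective_subtype _)
      (g.domain.comap f.toFun)).symm x : f.domain) : H) = (x : H) :=
    Submodule.map_equivMapOfInjective_symm_apply _ _ _ x
  have h2 : ((Submodule.equivMapOfInjective f.domain.subtype (Submodule.injective_subtype _)
      (g.domain.comap f.toFun)).symm x : f.domain) = ⟨(x:H), hx⟩ := Subtype.ext h1
  show g.toFun ((f.toFun.restrict (p := g.domain.comap f.toFun) (q := g.domain)
      (fun _ hx => hx)) ((Submodule.equivMapOfInjective f.domain.subtype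
      (Submodule.injective_subtype _) (g.domain.comap f.toFun)).symm x)) = _
  have h3 : (f.toFun.restrict (p := g.domain.comap f.toFun) (q := g.domain)
      (fun _ hx => hx)) ((Submodule.equivMapOfInjective f.domain.subtype
      (Submodule.injective_subtype _) (g.domain.comap f.toFun)).symm x)
      = ⟨f ⟨(x:H), hx⟩, hfx⟩ := by
    apply Subtype.ext
    show f.toFun _ = _
    exact congrArg f.toFun h2
  rw [h3]; rfl

end Aux

section Aux2
variable {H : Type*} [NormedAddCommGroup H] [NormedSpace ℂ H]

theorem LinearPMap.apply_congr {f : H →ₗ.[ℂ] H} {x y : H} (hx : x ∈ f.domain) (hy : y ∈ f.domain)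
    (h : x = y) : f ⟨x, hx⟩ = f ⟨y, hy⟩ := by cases h; rfl

theorem LinearPMap.apply_add' {f : H →ₗ.[ℂ] H} {x y : H} (hx : x ∈ f.domain) (hy : y ∈ f.domain)
    (h : x + y ∈ f.domain) : f ⟨x + y, h⟩ = f ⟨x, hx⟩ + f ⟨y, hy⟩ := by
  have h0 : (⟨x + y, h⟩ : f.domain) = ⟨x, hx⟩ + ⟨y, hy⟩ := rfl
  rw [h0, f.map_add]

theorem LinearPMap.apply_sub' {f : H →ₗ.[ℂ] H} {x y : H} (hx : x ∈ f.domain) (hy : y ∈ f.domain)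
    (h : x - y ∈ f.domain) : f ⟨x - y, h⟩ = f ⟨x, hx⟩ - f ⟨y, hy⟩ := by
  have h0 : (⟨x - y, h⟩ : f.domain) = ⟨x, hx⟩ - ⟨y, hy⟩ := rfl
  rw [h0, f.map_sub]

theorem LinearPMap.apply_eq_of_eq {f g : H →ₗ.[ℂ] H} (h : f = g) {x : f.domain} {y : g.domain}
    (hxy : (x : H) = (y : H)) : f x = g y := by
  subst h
  cases (Subtype.ext hxy : x = y)
  rfl

end Aux2

private theorem aux_ring_key {R : Type*} [Ring R] (a b : R) (h1 : b * a = a * a)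
    (h2 : b * b = a * a) :
    (a + b) * (a - b) - (a - b) * (a + b) = (a - b) * (a - b) + (a - b) * (a - b) := by
  have e1 : (a - b) * (a - b) = a * a - a * b := by
    rw [sub_mul, mul_sub, mul_sub, h1, h2]; abel
  rw [e1, add_mul, sub_mul, mul_sub a a b, mul_sub b a b, mul_add a a b, mul_add b a b, h1, h2]
  abel

private theorem aux_expand {R : Type*} [Ring R] (s x : R) (n : ℕ) :
    s * x ^ (n + 2) - x ^ (n + 2) * s
      = (s * x ^ (n + 1) - x ^ (n + 1) * s) * x + x ^ (n + 1) * (s * x - x * s) := by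
  rw [pow_succ x (n + 1)]
  simp only [sub_mul, mul_sub, mul_assoc]
  abel

private theorem aux_skew_zero {H : Type*} [NormedAddCommGroup H]
    [InnerProductSpace ℂ H] [CompleteSpace H] (a b : H →L[ℂ] H)
    (h1 : b * a = a * a) (h2 : b * b = a * a) (hskew : star (a - b) = -(a - b)) :
    a - b = 0 := by
  obtain ⟨x, hx⟩ : ∃ x, a - b = x := ⟨_, rfl⟩
  obtain ⟨s, hs⟩ : ∃ s, a + b = s := ⟨_, rfl⟩
  rw [hx] at hskew ⊢
  have key : s * x - x * s = x * x + x * x := by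
    rw [← hx, ← hs]; exact aux_ring_key a b h1 h2
  have hn : ∀ n : ℕ, s * x ^ (n + 1) - x ^ (n + 1) * s = ((2 * (n + 1) : ℕ) : ℂ) • x ^ (n + 2) := by
    intro n
    induction n with
    | zero =>
      rw [pow_one, key, pow_two]
      push_cast
      match_scalars
      norm_num
    | succ n ih =>
      show s * x ^ (n + 2) - x ^ (n + 2) * s = ((2 * (n + 2) : ℕ) : ℂ) • x ^ (n + 3)
      rw [aux_expand s x n, ih, key, smul_mul_assoc, ← pow_succ, mul_add (x ^ (n + 1)) (x * x) (x * x)]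
      have e3 : x ^ (n + 1) * (x * x) = x ^ (n + 3) := by
        rw [← pow_two, ← pow_add]
      have e7 : x ^ (n + 2 + 1) = x ^ (n + 3) := by norm_num
      rw [e3, e7]
      push_cast
      match_scalars
      ring
  have hnorm : ∀ n : ℕ, (n + 1 : ℝ) * ‖x ^ (n + 2)‖ ≤ ‖s‖ * ‖x ^ (n + 1)‖ := by
    intro n
    have h0 := hn n
    have hle : ‖((2 * (n + 1) : ℕ) : ℂ) • x ^ (n + 2)‖ ≤ 2 * (‖s‖ * ‖x ^ (n + 1)‖) := by
      rw [← h0]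
      refine le_trans (norm_sub_le _ _) ?_
      have l1 : ‖s * x ^ (n + 1)‖ ≤ ‖s‖ * ‖x ^ (n + 1)‖ := norm_mul_le _ _
      have l2 : ‖x ^ (n + 1) * s‖ ≤ ‖x ^ (n + 1)‖ * ‖s‖ := norm_mul_le _ _
      rw [mul_comm ‖x ^ (n + 1)‖] at l2
      linarith
    rw [norm_smul] at hle
    have habs : ‖((2 * (n + 1) : ℕ) : ℂ)‖ = 2 * (n + 1 : ℝ) := by
      rw [Complex.norm_natCast]; push_cast; ring
    rw [habs] at hle
    nlinarith [norm_nonneg (x ^ (n + 2))]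
  have hfact : ∀ n : ℕ, ‖x ^ (n + 1)‖ * (n.factorial : ℝ) ≤ ‖x‖ * ‖s‖ ^ n := by
    intro n
    induction n with
    | zero => simpa using le_refl ‖x‖
    | succ n ih =>
      have step := hnorm n
      have hfn : ((n + 1).factorial : ℝ) = (n + 1 : ℝ) * (n.factorial : ℝ) := by
        rw [Nat.factorial_succ]; push_cast; ring
      have hfnn : (0:ℝ) ≤ (n.factorial : ℝ) := by positivity
      have hsn : (0:ℝ) ≤ ‖s‖ := norm_nonneg _
      calc ‖x ^ (n + 2)‖ * ((n + 1).factorial : ℝ)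
          = ((n + 1 : ℝ) * ‖x ^ (n + 2)‖) * (n.factorial : ℝ) := by rw [hfn]; ring
        _ ≤ (‖s‖ * ‖x ^ (n + 1)‖) * (n.factorial : ℝ) := by nlinarith
        _ = ‖s‖ * (‖x ^ (n + 1)‖ * (n.factorial : ℝ)) := by ring
        _ ≤ ‖s‖ * (‖x‖ * ‖s‖ ^ n) := by nlinarith
        _ = ‖x‖ * ‖s‖ ^ (n + 1) := by ring
  have hsa : IsSelfAdjoint (Complex.I • x) := by
    rw [IsSelfAdjoint, star_smul, hskew, Complex.star_def, Complex.conj_I, neg_smul, smul_neg,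
      neg_neg]
  have hpow : ∀ n : ℕ, ‖x‖ ^ (2 ^ n) = ‖x ^ (2 ^ n)‖ := by
    intro n
    have h5 : ‖Complex.I • x‖ = ‖x‖ := by
      rw [norm_smul, Complex.norm_I, one_mul]
    have h6 := hsa.nnnorm_pow_two_pow n
    have h7 : ‖(Complex.I • x) ^ (2 ^ n)‖ = ‖Complex.I • x‖ ^ (2 ^ n) := by
      have h6' := congrArg (fun t : NNReal => (t : ℝ)) h6
      simpa using h6'
    have h8 : ‖(Complex.I • x) ^ (2 ^ n)‖ = ‖x ^ (2 ^ n)‖ := by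
      rw [smul_pow, norm_smul, norm_pow, Complex.norm_I, one_pow, one_mul]
    rw [← h8, h7, h5]
  by_contra hne
  have hxpos : (0 : ℝ) < ‖x‖ := norm_pos_iff.mpr hne
  have hMn : ∀ k : ℕ, (((2 ^ k - 1 : ℕ).factorial : ℝ)) ≤ (‖s‖ / ‖x‖) ^ (2 ^ k - 1 : ℕ) := by
    intro k
    obtain ⟨m, hm⟩ : ∃ m : ℕ, 2 ^ k = m + 1 := by
      have : 1 ≤ 2 ^ k := Nat.one_le_two_pow
      exact ⟨2 ^ k - 1, by omega⟩
    have hmeq : (2 ^ k - 1 : ℕ) = m := by omega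
    rw [hmeq]
    have hf := hfact m
    have hx1 : ‖x ^ (m + 1)‖ = ‖x‖ ^ (m + 1) := by
      rw [← hm, ← hpow k]
    rw [hx1] at hf
    have hxm : (0:ℝ) < ‖x‖ ^ m := by positivity
    have hkey : (m.factorial : ℝ) * ‖x‖ ^ m ≤ ‖s‖ ^ m := by
      have hxe : ‖x‖ ^ (m + 1) = ‖x‖ * ‖x‖ ^ m := by ring
      rw [hxe] at hf
      have hf' : ‖x‖ * (‖x‖ ^ m * (m.factorial : ℝ)) ≤ ‖x‖ * ‖s‖ ^ m := by
        calc ‖x‖ * (‖x‖ ^ m * (m.factorial : ℝ)) = ‖x‖ * ‖x‖ ^ m * (m.factorial : ℝ) := by ring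
          _ ≤ ‖x‖ * ‖s‖ ^ m := hf
      have := (mul_le_mul_iff_right₀ hxpos).mp hf'
      linarith [this]
    rw [div_pow, le_div_iff₀ hxm]
    linarith [hkey]
  have htend := FloorSemiring.tendsto_pow_div_factorial_atTop (K := ℝ) (‖s‖ / ‖x‖)
  have hev : ∀ᶠ (j : ℕ) in Filter.atTop, (‖s‖ / ‖x‖) ^ j / (j.factorial : ℝ) < 1 :=
    htend.eventually (gt_mem_nhds (by norm_num : (0:ℝ) < 1))
  obtain ⟨J, hJ⟩ := Filter.eventually_atTop.mp hev
  have hmJ : J ≤ 2 ^ J - 1 := by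
    have := Nat.lt_two_pow_self (n := J)
    omega
  have hlt := hJ (2 ^ J - 1) hmJ
  have hfac : (0:ℝ) < (((2 ^ J - 1 : ℕ)).factorial : ℝ) := by positivity
  rw [div_lt_one hfac] at hlt
  linarith [hMn J]

theorem star_eq_self_of_star_mul_self_eq_sq {H : Type*} [NormedAddCommGroup H]
    [InnerProductSpace ℂ H] [CompleteSpace H] (a : H →L[ℂ] H)
    (h1 : star a * a = a * a) : star a = a := by
  have h2 : star a * star a = a * a := by
    have h3 := congrArg star h1
    rw [star_mul, star_mul, star_star] at h3
    -- h3 : star a * a = star a * star a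
    rw [← h3, h1]
  have hskew : star (a - star a) = -(a - star a) := by
    rw [star_sub, star_star, neg_sub]
  have h0 := aux_skew_zero a (star a) h1 h2 hskew
  have := sub_eq_zero.mp h0
  exact this.symm


/-- a densely defined closed operator with `T*T = T²` is self-adjoint. -/
theorem statement_17 {H : Type*} [NormedAddCommGroup H] [InnerProductSpace ℂ H] [CompleteSpace H]
    (T : H →ₗ.[ℂ] H) (hdense : Dense (T.domain : Set H)) (hclosed : T.IsClosed)
    (heq : T.adjoint.pComp T = T.pComp T) :
    T.adjoint = T := by
  classical
  have hFA : T.adjoint.IsFormalAdjoint T := T.adjoint_isFormalAdjoint hdense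
  -- translate `heq` into pointwise statements
  have hDom : ∀ (x : H) (hx : x ∈ T.domain),
      (T ⟨x, hx⟩ ∈ T.adjoint.domain ↔ T ⟨x, hx⟩ ∈ T.domain) := by
    intro x hx
    constructor
    · intro h
      have hm : x ∈ (T.adjoint.pComp T).domain := LinearPMap.mem_pComp_domain.mpr ⟨hx, h⟩
      rw [heq] at hm
      obtain ⟨hx', h'⟩ := LinearPMap.mem_pComp_domain.mp hm
      exact h'
    · intro h
      have hm : x ∈ (T.pComp T).domain := LinearPMap.mem_pComp_domain.mpr ⟨hx, h⟩
      rw [← heq] at hm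
      obtain ⟨hx', h'⟩ := LinearPMap.mem_pComp_domain.mp hm
      exact h'
  have hAct : ∀ (x : H) (hx : x ∈ T.domain) (h2 : T ⟨x, hx⟩ ∈ T.domain),
      T.adjoint ⟨T ⟨x, hx⟩, (hDom x hx).mpr h2⟩ = T ⟨T ⟨x, hx⟩, h2⟩ := by
    intro x hx h2
    have hm1 : x ∈ (T.adjoint.pComp T).domain :=
      LinearPMap.mem_pComp_domain.mpr ⟨hx, (hDom x hx).mpr h2⟩
    have hm2 : x ∈ (T.pComp T).domain := LinearPMap.mem_pComp_domain.mpr ⟨hx, h2⟩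
    have e1 := LinearPMap.pComp_apply (g := T.adjoint) (f := T) ⟨x, hm1⟩ hx ((hDom x hx).mpr h2)
    have e2 := LinearPMap.pComp_apply (g := T) (f := T) ⟨x, hm2⟩ hx h2
    have e3 : (T.adjoint.pComp T) ⟨x, hm1⟩ = (T.pComp T) ⟨x, hm2⟩ :=
      LinearPMap.apply_eq_of_eq heq rfl
    rw [← e1, ← e2]
    exact e3
  -- the graph as a closed submodule of the Hilbert space `WithLp 2 (H × H)`
  set e2 : WithLp 2 (H × H) ≃L[ℂ] H × H := WithLp.prodContinuousLinearEquiv 2 ℂ H H with he2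
  set G : Submodule ℂ (WithLp 2 (H × H)) :=
    T.graph.comap ((e2 : WithLp 2 (H × H) →L[ℂ] H × H) : WithLp 2 (H × H) →ₗ[ℂ] H × H) with hG
  have hmemG : ∀ z : WithLp 2 (H × H), z ∈ G ↔ e2 z ∈ T.graph := fun z => Iff.rfl
  have hGclosed : IsClosed (G : Set (WithLp 2 (H × H))) := hclosed.preimage e2.continuous
  haveI : CompleteSpace G := hGclosed.completeSpace_coe
  have hinner : ∀ p q : H × H,
      (inner ℂ (e2.symm p) (e2.symm q) : ℂ) = inner ℂ p.1 q.1 + inner ℂ p.2 q.2 := by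
    intro p q; rfl
  -- the operators B = (1 + T*T)⁻¹ and C = T ∘ B
  set B : H →L[ℂ] H := (ContinuousLinearMap.fst ℂ H H).comp
    (((e2 : WithLp 2 (H × H) →L[ℂ] H × H)).comp (G.subtypeL.comp
      ((Submodule.orthogonalProjectionOnto G).comp
        (((e2.symm : H × H →L[ℂ] WithLp 2 (H × H))).comp (ContinuousLinearMap.inl ℂ H H))))) with hB
  set C : H →L[ℂ] H := (ContinuousLinearMap.snd ℂ H H).comp
    (((e2 : WithLp 2 (H × H) →L[ℂ] H × H)).comp (G.subtypeL.comp
      ((Submodule.orthogonalProjectionOnto G).comp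
        (((e2.symm : H × H →L[ℂ] WithLp 2 (H × H))).comp (ContinuousLinearMap.inl ℂ H H))))) with hC
  have hBC : ∀ h : H, (B h, C h) = e2 ↑(Submodule.orthogonalProjectionOnto G (e2.symm (h, 0))) := by
    intro h; rfl
  have hproj : ∀ h : H, (↑(Submodule.orthogonalProjectionOnto G (e2.symm (h, 0))) : WithLp 2 (H × H))
      = e2.symm (B h, C h) := by
    intro h
    rw [hBC h, ContinuousLinearEquiv.symm_apply_apply]
  -- membership facts
  have hmem : ∀ h : H, ∃ hu : B h ∈ T.domain, T ⟨B h, hu⟩ = C h := by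
    intro h
    have hg : (↑(Submodule.orthogonalProjectionOnto G (e2.symm (h, 0))) : WithLp 2 (H × H)) ∈ G :=
      (Submodule.orthogonalProjectionOnto G (e2.symm (h, 0))).2
    rw [hmemG] at hg
    rw [← hBC h] at hg
    obtain ⟨yy, hy1, hy2⟩ := T.mem_graph_iff.mp hg
    have hy1' : (yy : H) = B h := hy1
    have hmm : B h ∈ T.domain := hy1' ▸ yy.2
    refine ⟨hmm, ?_⟩
    have e5 : T ⟨B h, hmm⟩ = T ⟨(yy : H), yy.2⟩ := LinearPMap.apply_congr _ _ hy1'.symm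
    rw [e5]
    exact hy2
  have hB1 : ∀ h : H, B h ∈ T.domain := fun h => (hmem h).1
  have hTB : ∀ h : H, T ⟨B h, hB1 h⟩ = C h := fun h => (hmem h).2
  -- the fundamental orthogonality identity
  have horth : ∀ (h : H) (v : T.domain), (inner ℂ (h - B h) (v : H) : ℂ) = inner ℂ (C h) (T v) := by
    intro h v
    have hw : e2.symm (↑v, T v) ∈ G := by
      rw [hmemG, ContinuousLinearEquiv.apply_symm_apply]
      exact T.mem_graph v
    have h0 := (show (inner ℂ (e2.symm (h, 0) - ↑(Submodule.orthogonalProjectionOnto G (e2.symm (h, 0)))) (e2.symm (↑v, T v)) : ℂ) = 0 from G.starProjection_inner_eq_zero _ _ hw)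
    rw [hproj h] at h0
    have hms : e2.symm (h, 0) - e2.symm (B h, C h) = e2.symm ((h, 0) - (B h, C h)) :=
      ((e2.symm : H × H →L[ℂ] WithLp 2 (H × H)).map_sub ((h, 0) : H × H) (B h, C h)).symm
    rw [hms, hinner] at h0
    simp only [Prod.fst_sub, Prod.snd_sub] at h0
    have h1 : (inner ℂ (h - B h) (v : H) : ℂ) + inner ℂ ((0 : H) - C h) (T v) = 0 := h0
    rw [zero_sub, inner_neg_left] at h1
    linear_combination h1
  -- C h lands in the adjoint domain, with T† (C h) = h - B h
  have hCadj : ∀ h : H, C h ∈ T.adjoint.domain := by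
    intro h
    exact T.mem_adjoint_domain_of_exists _ ⟨h - B h, fun v => horth h v⟩
  have hCadjval : ∀ h : H, T.adjoint ⟨C h, hCadj h⟩ = h - B h := by
    intro h
    exact LinearPMap.adjoint_apply_eq hdense _ (fun v => horth h v)
  -- translate through heq : C h ∈ D(T), T (C h) = h - B h
  have hB2 : ∀ h : H, C h ∈ T.domain := by
    intro h
    have := (hDom (B h) (hB1 h)).mp (by rw [hTB h]; exact hCadj h)
    rwa [hTB h] at this
  have hB4 : ∀ h : H, T ⟨C h, hB2 h⟩ = h - B h := by
    intro h
    have h2' : T ⟨B h, hB1 h⟩ ∈ T.domain := by rw [hTB h]; exact hB2 h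
    have ha := hAct (B h) (hB1 h) h2'
    calc T ⟨C h, hB2 h⟩ = T ⟨T ⟨B h, hB1 h⟩, h2'⟩ :=
          LinearPMap.apply_congr _ _ (hTB h).symm
      _ = T.adjoint ⟨T ⟨B h, hB1 h⟩, (hDom (B h) (hB1 h)).mpr h2'⟩ := ha.symm
      _ = T.adjoint ⟨C h, hCadj h⟩ := LinearPMap.apply_congr _ _ (hTB h)
      _ = h - B h := hCadjval h
  -- uniqueness / left inverse property of B
  have hB5 : ∀ (u : H) (hu : u ∈ T.domain) (hu2 : T ⟨u, hu⟩ ∈ T.domain),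
      B (u + T ⟨T ⟨u, hu⟩, hu2⟩) = u := by
    intro u hu hu2
    obtain ⟨h, hh⟩ : ∃ h : H, u + T ⟨T ⟨u, hu⟩, hu2⟩ = h := ⟨_, rfl⟩
    rw [hh]
    have hv : B h - u ∈ T.domain := sub_mem (hB1 h) hu
    have hTv : T ⟨B h - u, hv⟩ = C h - T ⟨u, hu⟩ := by
      rw [LinearPMap.apply_sub' (hB1 h) hu hv, hTB h]
    have hTvmem : C h - T ⟨u, hu⟩ ∈ T.domain := sub_mem (hB2 h) hu2
    have hTv2 : T ⟨C h - T ⟨u, hu⟩, hTvmem⟩ = u - B h := by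
      rw [LinearPMap.apply_sub' (hB2 h) hu2 hTvmem, hB4 h, ← hh]
      abel
    have htvm : T ⟨B h - u, hv⟩ ∈ T.domain := by rw [hTv]; exact hTvmem
    have hTTv : T ⟨T ⟨B h - u, hv⟩, htvm⟩ = u - B h := by
      calc T ⟨T ⟨B h - u, hv⟩, htvm⟩ = T ⟨C h - T ⟨u, hu⟩, hTvmem⟩ :=
            LinearPMap.apply_congr _ _ hTv
        _ = u - B h := hTv2
    -- inner ℂ product argument : v + T(Tv) = 0 with v = B h - u
    have hip : (inner ℂ ((B h - u) + (u - B h)) (B h - u) : ℂ) = 0 := by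
      rw [show (B h - u) + (u - B h) = (0 : H) by abel, inner_zero_left]
    rw [inner_add_left] at hip
    have hip2 : (inner ℂ (u - B h) (B h - u) : ℂ)
        = inner ℂ (T ⟨B h - u, hv⟩) (T ⟨B h - u, hv⟩) := by
      rw [← hTTv]
      have hmadj : T ⟨T ⟨B h - u, hv⟩, htvm⟩ = T.adjoint ⟨T ⟨B h - u, hv⟩,
          (hDom _ hv).mpr htvm⟩ := (hAct _ hv htvm).symm
      rw [hmadj]
      exact hFA ⟨T ⟨B h - u, hv⟩, (hDom _ hv).mpr htvm⟩ ⟨B h - u, hv⟩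
    rw [hip2] at hip
    have hn1 : (inner ℂ (B h - u) (B h - u) : ℂ) = (‖B h - u‖ : ℂ) ^ 2 :=
      inner_self_eq_norm_sq_to_K _
    have hn2 : (inner ℂ (T ⟨B h - u, hv⟩) (T ⟨B h - u, hv⟩) : ℂ)
        = (‖T ⟨B h - u, hv⟩‖ : ℂ) ^ 2 := inner_self_eq_norm_sq_to_K _
    rw [hn1, hn2] at hip
    have hreal : ((‖B h - u‖ ^ 2 + ‖T ⟨B h - u, hv⟩‖ ^ 2 : ℝ) : ℂ) = 0 := by
      push_cast
      linear_combination hip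
    have hreal' : ‖B h - u‖ ^ 2 + ‖T ⟨B h - u, hv⟩‖ ^ 2 = 0 := by exact_mod_cast hreal
    have hle : ‖B h - u‖ ^ 2 ≤ 0 := by nlinarith [sq_nonneg ‖T ⟨B h - u, hv⟩‖]
    have hsq : ‖B h - u‖ ^ 2 = 0 := le_antisymm hle (sq_nonneg _)
    have hz : ‖B h - u‖ = 0 := by
      nlinarith [norm_nonneg (B h - u)]
    exact sub_eq_zero.mp (norm_eq_zero.mp hz)
  -- B is self-adjoint
  have hsym : ∀ h k : H, (inner ℂ (B h) k : ℂ) = inner ℂ h (B k) := by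
    intro h k
    have j1 : (inner ℂ h (B k) : ℂ) - inner ℂ (B h) (B k) = inner ℂ (C h) (C k) := by
      rw [← inner_sub_left]
      have := horth h ⟨B k, hB1 k⟩
      rwa [hTB k] at this
    have j2 : (inner ℂ k (B h) : ℂ) - inner ℂ (B k) (B h) = inner ℂ (C k) (C h) := by
      rw [← inner_sub_left]
      have := horth k ⟨B h, hB1 h⟩
      rwa [hTB h] at this
    have j3 := congrArg (starRingEnd ℂ) j2
    simp only [_root_.map_sub, inner_conj_symm] at j3
    linear_combination j3 - j1
  -- T and B "commute"
  have hBTcomm : ∀ (x : H) (hx : x ∈ T.domain), B (T ⟨x, hx⟩) = C x := by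
    intro x hx
    have hAm : x - B x ∈ T.domain := sub_mem hx (hB1 x)
    have hCx2 : T ⟨C x, hB2 x⟩ ∈ T.domain := by rw [hB4 x]; exact hAm
    have e7 : x = B x + (x - B x) := by abel
    have hsum : B x + (x - B x) ∈ T.domain := by rw [← e7]; exact hx
    have e8 : T ⟨x, hx⟩ = T ⟨B x, hB1 x⟩ + T ⟨x - B x, hAm⟩ := by
      rw [← LinearPMap.apply_add' (hB1 x) hAm hsum]
      exact LinearPMap.apply_congr _ _ e7
    have e9 : T ⟨x - B x, hAm⟩ = T ⟨T ⟨C x, hB2 x⟩, hCx2⟩ :=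
      LinearPMap.apply_congr _ _ (hB4 x).symm
    have hTx : T ⟨x, hx⟩ = C x + T ⟨T ⟨C x, hB2 x⟩, hCx2⟩ := by
      rw [e8, hTB x, e9]
    rw [hTx]
    exact hB5 (C x) (hB2 x) hCx2
  -- C² = B - B²
  have hCC : ∀ h : H, C (C h) = B h - B (B h) := by
    intro h
    have c2 : B (C h) = C (B h) := by
      have := hBTcomm (B h) (hB1 h)
      rwa [hTB h] at this
    calc C (C h) = T ⟨B (C h), hB1 _⟩ := (hTB _).symm
      _ = T ⟨C (B h), hB2 (B h)⟩ := LinearPMap.apply_congr _ _ c2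
      _ = B h - B (B h) := hB4 (B h)
  -- C*C = B - B²
  have hCstarC : ∀ h k : H, (inner ℂ (C h) (C k) : ℂ) = inner ℂ h (B k - B (B k)) := by
    intro h k
    have j1 : (inner ℂ h (B k) : ℂ) - inner ℂ (B h) (B k) = inner ℂ (C h) (C k) := by
      rw [← inner_sub_left]
      have := horth h ⟨B k, hB1 k⟩
      rwa [hTB k] at this
    rw [inner_sub_right]
    have j4 : (inner ℂ (B h) (B k) : ℂ) = inner ℂ h (B (B k)) := hsym h (B k)
    linear_combination j1.symm - j4
  -- C is self-adjoint via the bounded lemma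
  have hCsq : star C * C = C * C := by
    ext h
    apply ext_inner_right ℂ
    intro k
    have l1 : ((star C * C) h) = ContinuousLinearMap.adjoint C (C h) := by
      rw [ContinuousLinearMap.star_eq_adjoint]; rfl
    have l3 : ((C * C) h) = C (C h) := rfl
    rw [l1, l3, ContinuousLinearMap.adjoint_inner_left, hCstarC h k, hCC h]
    have m1 := hsym h k
    have m4 := hsym (B h) k
    have m5 := hsym h (B k)
    simp only [inner_sub_left, inner_sub_right]
    linear_combination m4 + m5 - m1
  have hCstar : star C = C := star_eq_self_of_star_mul_self_eq_sq C hCsq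
  have Cadj : ContinuousLinearMap.adjoint C = C := by
    rw [← ContinuousLinearMap.star_eq_adjoint, hCstar]
  -- C y = B (T† y) for y in D(T†)
  have hCy : ∀ (y : H) (hy : y ∈ T.adjoint.domain), C y = B (T.adjoint ⟨y, hy⟩) := by
    intro y hy
    apply ext_inner_right ℂ
    intro k
    have r2 : (inner ℂ (T.adjoint ⟨y, hy⟩) (B k) : ℂ) = inner ℂ y (C k) := by
      have r3 := hFA ⟨y, hy⟩ ⟨B k, hB1 k⟩
      rw [hTB k] at r3
      exact r3
    calc (inner ℂ (C y) k : ℂ) = inner ℂ y (C k) := by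
          conv_lhs => rw [← Cadj]
          exact ContinuousLinearMap.adjoint_inner_left _ _ _
      _ = inner ℂ (T.adjoint ⟨y, hy⟩) (B k) := r2.symm
      _ = inner ℂ (B (T.adjoint ⟨y, hy⟩)) k := (hsym _ k).symm
  -- T* ⊆ T
  have hTstarval : ∀ (y : H) (hy : y ∈ T.adjoint.domain),
      ∃ hyT : y ∈ T.domain, T ⟨y, hyT⟩ = T.adjoint ⟨y, hy⟩ := by
    intro y hy
    obtain ⟨z, hz⟩ : ∃ z : H, T.adjoint ⟨y, hy⟩ = z := ⟨_, rfl⟩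
    rw [hz]
    have w1 : C y = B z := by rw [← hz]; exact hCy y hy
    have m0 : T ⟨C y, hB2 y⟩ = C z := by
      calc T ⟨C y, hB2 y⟩ = T ⟨B z, hB1 z⟩ := LinearPMap.apply_congr _ _ w1
        _ = C z := hTB z
    have hyeq : y = B y + C z := by
      have h4 := hB4 y
      rw [m0] at h4
      rw [h4]; abel
    have hyT : y ∈ T.domain := by rw [hyeq]; exact add_mem (hB1 y) (hB2 z)
    refine ⟨hyT, ?_⟩
    have hsum : B y + C z ∈ T.domain := by rw [← hyeq]; exact hyT
    have e10 : T ⟨y, hyT⟩ = T ⟨B y, hB1 y⟩ + T ⟨C z, hB2 z⟩ := by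
      rw [← LinearPMap.apply_add' (hB1 y) (hB2 z) hsum]
      exact LinearPMap.apply_congr _ _ hyeq
    rw [e10, hTB y, hB4 z, w1]
    abel
  -- density of the range of Q in the graph, and T ⊆ T*
  have hQmem : ∀ h : H, (G.subtypeL.comp ((Submodule.orthogonalProjectionOnto G).comp
      (((e2.symm : H × H →L[ℂ] WithLp 2 (H × H))).comp (ContinuousLinearMap.inl ℂ H H)))) h
      = e2.symm (B h, C h) := fun h => hproj h
  obtain ⟨Q, hQdef⟩ : ∃ Q : H →L[ℂ] WithLp 2 (H × H),
      Q = G.subtypeL.comp ((Submodule.orthogonalProjectionOnto G).comp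
      (((e2.symm : H × H →L[ℂ] WithLp 2 (H × H))).comp (ContinuousLinearMap.inl ℂ H H))) :=
    ⟨_, rfl⟩
  have hQval : ∀ h : H, Q h = e2.symm (B h, C h) := by intro h; rw [hQdef]; exact hQmem h
  obtain ⟨W, hWdef⟩ : ∃ W : Submodule ℂ (WithLp 2 (H × H)), W = LinearMap.range (Q : H →ₗ[ℂ] WithLp 2 (H × H)) := ⟨_, rfl⟩
  have hWQ : ∀ h : H, Q h ∈ W := by intro h; rw [hWdef]; exact ⟨h, rfl⟩
  have hWmem : ∀ w ∈ W, ∃ h : H, Q h = w := by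
    intro w hw; rw [hWdef] at hw; exact hw
  have hWG : W ≤ G := by
    intro w hw
    obtain ⟨h, rfl⟩ := hWmem w hw
    rw [hQval h, hmemG, ContinuousLinearEquiv.apply_symm_apply]
    rw [← hTB h]
    exact T.mem_graph ⟨B h, hB1 h⟩
  obtain ⟨K, hKdef⟩ : ∃ K : Submodule ℂ (WithLp 2 (H × H)), K = W.topologicalClosure := ⟨_, rfl⟩
  have hKG : K ≤ G := by
    rw [hKdef]
    exact W.topologicalClosure_minimal hWG hGclosed
  have hKclosed : IsClosed (K : Set (WithLp 2 (H × H))) := by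
    rw [hKdef]; exact Submodule.isClosed_topologicalClosure W
  haveI : CompleteSpace K := hKclosed.completeSpace_coe
  have hWK : W ≤ K := by rw [hKdef]; exact Submodule.le_topologicalClosure W
  have hgraphK : ∀ v : T.domain, e2.symm ((v : H), T v) ∈ K := by
    intro v
    have hgG : e2.symm ((v : H), T v) ∈ G := by
      rw [hmemG, ContinuousLinearEquiv.apply_symm_apply]
      exact T.mem_graph v
    obtain ⟨g, hg⟩ : ∃ g : WithLp 2 (H × H), e2.symm ((v : H), T v) = g := ⟨_, rfl⟩
    rw [hg] at hgG ⊢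
    obtain ⟨d, hd⟩ : ∃ d : WithLp 2 (H × H), g - ↑(Submodule.orthogonalProjectionOnto K g) = d := ⟨_, rfl⟩
    have hdG : d ∈ G := by
      rw [← hd]
      exact sub_mem hgG (hKG (Submodule.orthogonalProjectionOnto K g).2)
    have hdorth : d ∈ Kᗮ := by rw [← hd]; exact K.sub_starProjection_mem_orthogonal g
    obtain ⟨xh, hx1, hx2⟩ := T.mem_graph_iff.mp ((hmemG d).mp hdG)
    have hx1' : (xh : H) = (e2 d).1 := hx1
    have hx2' : T xh = (e2 d).2 := hx2
    have hzero : ∀ h : H, (inner ℂ h ((xh : H)) : ℂ) = 0 := by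
      intro h
      have h0 : (inner ℂ (Q h) d : ℂ) = 0 :=
        (Submodule.mem_orthogonal K d).mp hdorth _ (hWK (hWQ h))
      rw [hQval h] at h0
      have hde : d = e2.symm (e2 d) := (ContinuousLinearEquiv.symm_apply_apply e2 d).symm
      rw [hde, hinner] at h0
      rw [← hx1', ← hx2'] at h0
      have h5 := horth h xh
      rw [inner_sub_left] at h5
      linear_combination h5 + h0
    have hx0 : (xh : H) = 0 := by
      have := hzero (xh : H)
      rwa [inner_self_eq_zero] at this
    have hd0 : d = 0 := by
      have hxsub : xh = 0 := Subtype.ext hx0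
      have hTxh : T xh = 0 := by rw [hxsub]; exact T.map_zero
      have he : e2 d = (0, 0) := by
        refine Prod.ext ?_ ?_
        · rw [← hx1', hx0]
        · rw [← hx2', hTxh]
      have he' : e2 d = 0 := by rw [he]; rfl
      have := congrArg e2.symm he'
      rwa [ContinuousLinearEquiv.symm_apply_apply, _root_.map_zero] at this
    have : g = ↑(Submodule.orthogonalProjectionOnto K g) := by
      have := sub_eq_zero.mp (hd ▸ hd0 : g - ↑(Submodule.orthogonalProjectionOnto K g) = 0)
      exact this
    rw [this]
    exact (Submodule.orthogonalProjectionOnto K g).2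
  have hTsub : ∀ (x : H), x ∈ T.domain → x ∈ T.adjoint.domain := by
    intro x hx
    apply T.mem_adjoint_domain_of_exists
    refine ⟨T ⟨x, hx⟩, ?_⟩
    intro v
    -- the functional w ↦ ⟪e2.symm (-(T x), x), w⟫ vanishes on W hence on K
    have hφW : ∀ w ∈ W, (inner ℂ (e2.symm (-(T ⟨x, hx⟩), x)) w : ℂ) = 0 := by
      intro w hw
      obtain ⟨h, rfl⟩ := hWmem w hw
      rw [hQval h, hinner]
      have n1 : (inner ℂ x (C h) : ℂ) = inner ℂ (C x) h := by
        conv_lhs => rw [← Cadj]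
        exact ContinuousLinearMap.adjoint_inner_right _ _ _
      have n2 : (inner ℂ (T ⟨x, hx⟩) (B h) : ℂ) = inner ℂ (C x) h := by
        rw [← hBTcomm x hx]
        exact (hsym (T ⟨x, hx⟩) h).symm
      rw [inner_neg_left]
      linear_combination n1 - n2
    have hφK : ∀ w ∈ K, (inner ℂ (e2.symm (-(T ⟨x, hx⟩), x)) w : ℂ) = 0 := by
      intro w hw
      have hsubset : (W : Set (WithLp 2 (H × H)))
          ⊆ ((innerSL ℂ (e2.symm (-(T ⟨x, hx⟩), x))) ⁻¹' {0}) := fun u hu => hφW u hu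
      have hcl : closure (W : Set (WithLp 2 (H × H)))
          ⊆ ((innerSL ℂ (e2.symm (-(T ⟨x, hx⟩), x))) ⁻¹' {0}) :=
        closure_minimal hsubset
          ((isClosed_singleton).preimage (innerSL ℂ (e2.symm (-(T ⟨x, hx⟩), x))).continuous)
      have hwcl : w ∈ closure (W : Set (WithLp 2 (H × H))) := by
        have : w ∈ (W.topologicalClosure : Set (WithLp 2 (H × H))) := by rw [← hKdef]; exact hw
        rwa [Submodule.topologicalClosure_coe] at this
      exact hcl hwcl
    have h0 := hφK _ (hgraphK v)
    rw [hinner] at h0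
    rw [inner_neg_left] at h0
    linear_combination -h0
  -- conclusion
  have hdomeq : T.adjoint.domain = T.domain := by
    apply le_antisymm
    · intro y hy; exact (hTstarval y hy).1
    · intro x hx; exact hTsub x hx
  refine LinearPMap.ext hdomeq ?_
  intro x y hxy
  obtain ⟨hyT, hval⟩ := hTstarval x y
  have e12 : T ⟨x, hxy⟩ = T ⟨x, hyT⟩ := rfl
  rw [e12, hval]
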